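/- For finite sets A, B, an element a ∈ A, and acyclic directed weighted complete graphs g ∈ 𝒢ₙ(A), h ∈ 𝒢ₙ(B), the graph g ∘_a h on A[B/a] = (A∖{a}) ⊔ B defined by: (1) a' →ʷ a'' if a',a'' ∈ A∖{a} and a' →ʷ a'' in g; (2) b →ʷ b' if b,b' ∈ B and b →ʷ b' in h; (3) a' →ʷ b if a' ∈ A∖{a}, b ∈ B, and a' →ʷ a in g; (4) b →ʷ a' if a' ∈ A∖{a}, b ∈ B, and a →ʷ a' in g, is again acyclic. Moreover, the composition map ∘_a: 𝒢ₙ(A) × 𝒢ₙ(B) → 𝒢ₙ(A[B/a]) is monotone with respect to the product order. -/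
import Mathlib


structure CGraph (A : Type) (n : ℕ) where
  dir : A → A → Prop
  wt : A → A → ℕ
  dir_irrefl : ∀ a, ¬ dir a a
  dir_total : ∀ a b, a ≠ b → (dir a b ↔ ¬ dir b a)
  wt_symm : ∀ a b, wt a b = wt b a
  wt_irrefl : ∀ a, wt a a = 0
  wt_pos : ∀ a b, a ≠ b → 1 ≤ wt a b
  wt_le_n : ∀ a b, a ≠ b → wt a b ≤ n

def CGraph.le {A : Type} {n : ℕ} (g h : CGraph A n) : Prop :=
  ∀ a b, a ≠ b → g.dir a b →
    (h.dir a b ∧ g.wt a b ≤ h.wt a b) ∨ (h.dir b a ∧ g.wt a b < h.wt b a)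

def CGraph.Acyclic {A : Type} {n : ℕ} (g : CGraph A n) : Prop :=
  ∀ a b c, g.dir a b → g.dir b c → g.dir a c

/-- The direction relation of the composite graph `g ∘_a h` on `A[B/a] = (A∖{a}) ⊕ B`. -/
def dirComp {A B : Type} {n : ℕ} (g : CGraph A n) (a : A) (h : CGraph B n) :
    ({x : A // x ≠ a} ⊕ B) → ({x : A // x ≠ a} ⊕ B) → Prop
  | .inl x, .inl y => g.dir x.1 y.1
  | .inl x, .inr _ => g.dir x.1 a
  | .inr _, .inl y => g.dir a y.1
  | .inr b, .inr b' => h.dir b b'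

/-- The weight function of the composite graph `g ∘_a h` on `A[B/a] = (A∖{a}) ⊕ B`. -/
def wtComp {A B : Type} {n : ℕ} (g : CGraph A n) (a : A) (h : CGraph B n) :
    ({x : A // x ≠ a} ⊕ B) → ({x : A // x ≠ a} ⊕ B) → ℕ
  | .inl x, .inl y => g.wt x.1 y.1
  | .inl x, .inr _ => g.wt x.1 a
  | .inr _, .inl y => g.wt a y.1
  | .inr b, .inr b' => h.wt b b'

/-- the operadic composite `g ∘_a h` of acyclic directed weighted complete graphs
is again acyclic, and composition is monotone in both arguments with respect to the order on
weighted complete graphs. -/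
theorem statement2 {A B : Type} {n : ℕ} (a : A)
    (g g' : CGraph A n) (h h' : CGraph B n)
    (hg : g.Acyclic) (hh : h.Acyclic) (hgg' : g.le g') (hhh' : h.le h') :
    (∀ p q r, dirComp g a h p q → dirComp g a h q r → dirComp g a h p r) ∧
    (∀ p q, p ≠ q → dirComp g a h p q →
      (dirComp g' a h' p q ∧ wtComp g a h p q ≤ wtComp g' a h' p q) ∨
      (dirComp g' a h' q p ∧ wtComp g a h p q < wtComp g' a h' q p)) := by
  constructor
  · rintro (x | b) (y | b') (z | b'') h1 h2 <;>
      simp only [dirComp] at * <;>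
      first
        | exact hg _ _ _ h1 h2
        | exact h1
        | exact h2
        | exact hh _ _ _ h1 h2
        | exact absurd h1 ((g.dir_total a y.1 (Ne.symm y.2)).mp h1 h2 |>.elim)
  · rintro (x | b) (y | b') hpq h1 <;> simp only [dirComp, wtComp] at *
    · exact hgg' x.1 y.1 (fun e => hpq (by cases x; cases y; simp_all)) h1
    · exact hgg' x.1 a x.2 h1
    · exact hgg' a y.1 (Ne.symm y.2) h1
    · exact hhh' b b' (fun e => hpq (by rw [e])) h1
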